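/- For all real a < 0 and γ ∈ (0,1), the improper double integral ∫_0^∞ ∫_0^∞ γ^{s+t} e^{2a(s+t)} (1 − e^{−2a·min(s,t)})² ds dt converges and equals 2a² / (log(γ) · (a + log(γ)) · (2a + log(γ))²). -/

import Mathlib

open MeasureTheory Set Filter Real


-- basic exp integrals
lemma my_intOn_exp {β : ℝ} (hβ : β < 0) (c : ℝ) :
    IntegrableOn (fun x : ℝ => Real.exp (β * x)) (Set.Ioi c) := by
  have := exp_neg_integrableOn_Ioi c (show (0:ℝ) < -β by linarith)
  simpa using this

lemma my_tendsto_exp {β : ℝ} (hβ : β < 0) :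
    Tendsto (fun x : ℝ => Real.exp (β * x)) atTop (nhds 0) := by
  have h1 : Tendsto (fun x : ℝ => β * x) atTop atBot :=
    Tendsto.const_mul_atTop_of_neg hβ tendsto_id
  exact tendsto_exp_atBot.comp h1

lemma my_int_exp {β : ℝ} (hβ : β < 0) (c : ℝ) :
    ∫ x in Set.Ioi c, Real.exp (β * x) = -Real.exp (β * c) / β := by
  have hβ0 : β ≠ 0 := ne_of_lt hβ
  have hd : ∀ x ∈ Set.Ici c, HasDerivAt (fun x : ℝ => Real.exp (β * x) / β)
      (Real.exp (β * x)) x := by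
    intro x _
    have : HasDerivAt (fun x : ℝ => Real.exp (β * x)) (Real.exp (β * x) * β) x :=
      by simpa using ((hasDerivAt_id x).const_mul β).exp
    have := this.div_const β
    simpa [mul_div_assoc, mul_div_cancel_right₀ _ hβ0] using this
  have ht : Tendsto (fun x : ℝ => Real.exp (β * x) / β) atTop (nhds 0) := by
    have := (my_tendsto_exp hβ).div_const β
    simpa using this
  have := integral_Ioi_of_hasDerivAt_of_tendsto' hd (my_intOn_exp hβ c) ht
  rw [this]; ring

lemma my_tendsto_x_exp {β : ℝ} (hβ : β < 0) :
    Tendsto (fun x : ℝ => x * Real.exp (β * x)) atTop (nhds 0) := by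
  have h1 : Tendsto (fun x : ℝ => -β * x) atTop atTop :=
    Tendsto.const_mul_atTop (by linarith) tendsto_id
  have h2 := (tendsto_pow_mul_exp_neg_atTop_nhds_zero 1).comp h1
  have h3 := h2.div_const (-β)
  rw [zero_div] at h3
  refine h3.congr fun x => ?_
  have hβ0 : β ≠ 0 := ne_of_lt hβ
  simp only [Function.comp_apply, Function.comp, pow_one, neg_mul, neg_neg]
  field_simp

lemma my_hasDeriv_x_exp {β : ℝ} (hβ : β < 0) (x : ℝ) :
    HasDerivAt (fun x : ℝ => (β * x - 1) * Real.exp (β * x) / β ^ 2)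
      (x * Real.exp (β * x)) x := by
  have hβ0 : β ≠ 0 := ne_of_lt hβ
  have h1 : HasDerivAt (fun x : ℝ => β * x - 1) β x :=
    by simpa using ((hasDerivAt_id x).const_mul β).sub_const 1
  have h2 : HasDerivAt (fun x : ℝ => Real.exp (β * x)) (Real.exp (β * x) * β) x :=
    by simpa using ((hasDerivAt_id x).const_mul β).exp
  have h3 := (h1.mul h2).div_const (β ^ 2)
  refine h3.congr_deriv ?_
  rw [div_eq_iff (by positivity)]
  ring

lemma my_tendsto_aux {β : ℝ} (hβ : β < 0) :
    Tendsto (fun x : ℝ => (β * x - 1) * Real.exp (β * x) / β ^ 2) atTop (nhds 0) := by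
  have h1 := ((my_tendsto_x_exp hβ).const_mul β).sub (my_tendsto_exp hβ)
  have h2 := h1.div_const (β ^ 2)
  simp only [mul_zero, sub_zero, zero_div] at h2
  refine h2.congr fun x => ?_
  ring

lemma my_intOn_x_exp {β : ℝ} (hβ : β < 0) :
    IntegrableOn (fun x : ℝ => x * Real.exp (β * x)) (Set.Ioi 0) := by
  refine integrableOn_Ioi_deriv_of_nonneg' (fun x _ => my_hasDeriv_x_exp hβ x)
    (fun x hx => ?_) (my_tendsto_aux hβ)
  exact mul_nonneg (le_of_lt hx) (Real.exp_pos _).le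

lemma my_int_x_exp {β : ℝ} (hβ : β < 0) :
    ∫ x in Set.Ioi (0:ℝ), x * Real.exp (β * x) = 1 / β ^ 2 := by
  have := integral_Ioi_of_hasDerivAt_of_tendsto' (fun x _ => my_hasDeriv_x_exp hβ x)
    (my_intOn_x_exp hβ) (my_tendsto_aux hβ)
  rw [this]
  simp [Real.exp_zero]
  ring

lemma my_interval_exp (α s : ℝ) (hα : α ≠ 0) :
    ∫ t in (0:ℝ)..s, Real.exp (α * t) = (Real.exp (α * s) - 1) / α := by
  have hd : ∀ t ∈ Set.uIcc (0:ℝ) s, HasDerivAt (fun t : ℝ => Real.exp (α * t) / α)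
      (Real.exp (α * t)) t := by
    intro t _
    have : HasDerivAt (fun t : ℝ => Real.exp (α * t)) (Real.exp (α * t) * α) t :=
      by simpa using ((hasDerivAt_id t).const_mul α).exp
    have := this.div_const α
    simpa [mul_div_assoc, mul_div_cancel_right₀ _ hα] using this
  have hc : IntervalIntegrable (fun t : ℝ => Real.exp (α * t)) volume 0 s :=
    (Real.continuous_exp.comp (continuous_const.mul continuous_id)).intervalIntegrable 0 s
  rw [intervalIntegral.integral_eq_sub_of_hasDerivAt hd hc]
  simp [Real.exp_zero]
  ring


lemma my_aux_integrable {α β : ℝ} (hβ : β < 0) (hαβ : α + β < 0) (hle : β ≤ α) :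
    IntegrableOn (fun p : ℝ × ℝ => Real.exp (α * min p.1 p.2 + β * max p.1 p.2))
      (Set.Ioi 0 ×ˢ Set.Ioi 0) := by
  have hc0 : (α + β) / 2 < 0 := by linarith
  have hg : IntegrableOn (fun p : ℝ × ℝ => Real.exp ((α + β) / 2 * p.1) * Real.exp ((α + β) / 2 * p.2))
      (Set.Ioi 0 ×ˢ Set.Ioi 0) := by
    rw [IntegrableOn, Measure.volume_eq_prod, ← Measure.prod_restrict]
    exact (my_intOn_exp hc0 0).mul_prod (my_intOn_exp hc0 0)
  have hm : AEStronglyMeasurable (fun p : ℝ × ℝ =>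
      Real.exp (α * min p.1 p.2 + β * max p.1 p.2))
      (volume.restrict (Set.Ioi 0 ×ˢ Set.Ioi 0)) := by
    apply Continuous.aestronglyMeasurable
    exact Real.continuous_exp.comp
      ((continuous_const.mul (continuous_fst.min continuous_snd)).add
        (continuous_const.mul (continuous_fst.max continuous_snd)))
  refine hg.mono' hm (Filter.Eventually.of_forall fun p => ?_)
  rw [Real.norm_eq_abs, abs_of_pos (Real.exp_pos _), ← Real.exp_add]
  apply Real.exp_le_exp.2
  rcases le_total p.1 p.2 with h | h
  · rw [min_eq_left h, max_eq_right h]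
    nlinarith [mul_nonneg (sub_nonneg.2 hle) (sub_nonneg.2 h)]
  · rw [min_eq_right h, max_eq_left h]
    nlinarith [mul_nonneg (sub_nonneg.2 hle) (sub_nonneg.2 h)]

lemma my_aux_integral {α β : ℝ} (hβ : β < 0) (hαβ : α + β < 0) (hle : β ≤ α) :
    ∫ p in Set.Ioi (0:ℝ) ×ˢ Set.Ioi (0:ℝ),
      Real.exp (α * min p.1 p.2 + β * max p.1 p.2) = 2 / (β * (α + β)) := by
  have hβ0 : β ≠ 0 := ne_of_lt hβ
  have hαβ0 : α + β ≠ 0 := ne_of_lt hαβ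
  have hInt := my_aux_integrable hβ hαβ hle
  rw [Measure.volume_eq_prod] at hInt ⊢
  rw [setIntegral_prod _ hInt]
  have hinner : ∀ s ∈ Set.Ioi (0:ℝ),
      ∫ t in Set.Ioi (0:ℝ), Real.exp (α * min s t + β * max s t) =
        Real.exp (β * s) * (∫ t in (0:ℝ)..s, Real.exp (α * t))
          + Real.exp (α * s) * (-Real.exp (β * s) / β) := by
    intro s hs
    have hs0 : (0:ℝ) < s := hs
    have hsplit : Set.Ioc (0:ℝ) s ∪ Set.Ioi s = Set.Ioi 0 := Ioc_union_Ioi_eq_Ioi hs0.le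
    have h1 : IntegrableOn (fun t : ℝ => Real.exp (α * min s t + β * max s t))
        (Set.Ioc 0 s) := by
      apply Continuous.integrableOn_Ioc
      exact Real.continuous_exp.comp
        ((continuous_const.mul (continuous_const.min continuous_id)).add
          (continuous_const.mul (continuous_const.max continuous_id)))
    have h2eq : Set.EqOn (fun t : ℝ => Real.exp (α * min s t + β * max s t))
        (fun t : ℝ => Real.exp (α * s) * Real.exp (β * t)) (Set.Ioi s) := by
      intro t ht
      have hst : s ≤ t := le_of_lt ht
      simp only [min_eq_left hst, max_eq_right hst, ← Real.exp_add]
    have h2 : IntegrableOn (fun t : ℝ => Real.exp (α * min s t + β * max s t))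
        (Set.Ioi s) :=
      IntegrableOn.congr_fun ((my_intOn_exp hβ s).const_mul (Real.exp (α * s)))
        (fun t ht => (h2eq ht).symm) measurableSet_Ioi
    rw [← hsplit, setIntegral_union (Set.Ioc_disjoint_Ioi le_rfl) measurableSet_Ioi h1 h2]
    congr 1
    · rw [← intervalIntegral.integral_of_le hs0.le, ← intervalIntegral.integral_const_mul]
      apply intervalIntegral.integral_congr
      intro t ht
      rw [Set.uIcc_of_le hs0.le] at ht
      have hts : t ≤ s := ht.2
      simp only [min_eq_right hts, max_eq_left hts, ← Real.exp_add]
      ring_nf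
    · rw [setIntegral_congr_fun measurableSet_Ioi h2eq, integral_const_mul, my_int_exp hβ s]
  rw [setIntegral_congr_fun measurableSet_Ioi hinner]
  by_cases hα : α = 0
  · subst hα
    have hptw : Set.EqOn
        (fun s : ℝ => Real.exp (β * s) * (∫ t in (0:ℝ)..s, Real.exp (0 * t))
          + Real.exp (0 * s) * (-Real.exp (β * s) / β))
        (fun s : ℝ => s * Real.exp (β * s) + (-1/β) * Real.exp (β * s)) (Set.Ioi 0) := by
      intro s _
      simp only [zero_mul, Real.exp_zero, intervalIntegral.integral_const, smul_eq_mul,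
        mul_one, sub_zero, one_mul]
      ring
    rw [setIntegral_congr_fun measurableSet_Ioi hptw,
      integral_add (my_intOn_x_exp hβ) ((my_intOn_exp hβ 0).const_mul (-1/β)),
      integral_const_mul, my_int_x_exp hβ, my_int_exp hβ 0]
    rw [mul_zero, Real.exp_zero]
    field_simp
    ring
  · have hαβlt : α + β ≠ 0 := hαβ0
    have hptw : Set.EqOn
        (fun s : ℝ => Real.exp (β * s) * (∫ t in (0:ℝ)..s, Real.exp (α * t))
          + Real.exp (α * s) * (-Real.exp (β * s) / β))
        (fun s : ℝ => (1/α - 1/β) * Real.exp ((α + β) * s)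
          - (1/α) * Real.exp (β * s)) (Set.Ioi 0) := by
      intro s _
      have e1 : Real.exp ((α + β) * s) = Real.exp (α * s) * Real.exp (β * s) := by
        rw [← Real.exp_add]; ring_nf
      simp only [my_interval_exp α s hα, e1]
      field_simp
      ring
    rw [setIntegral_congr_fun measurableSet_Ioi hptw,
      integral_sub (((my_intOn_exp hαβ 0).const_mul (1/α - 1/β)))
        ((my_intOn_exp hβ 0).const_mul (1/α)),
      integral_const_mul, integral_const_mul, my_int_exp hαβ 0, my_int_exp hβ 0]
    rw [mul_zero, mul_zero, Real.exp_zero]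
    field_simp
    ring


lemma my_pt (L a m M : ℝ) :
    Real.exp (L * (m + M)) * Real.exp (2 * a * (m + M)) * (1 - Real.exp (-2 * a * m)) ^ 2
      = Real.exp ((2 * a + L) * m + (2 * a + L) * M)
        - 2 * Real.exp (L * m + (2 * a + L) * M)
        + Real.exp ((L - 2 * a) * m + (2 * a + L) * M) := by
  have hU : Real.exp (2 * a * m) ≠ 0 := Real.exp_ne_zero _
  rw [show L * (m + M) = L * m + L * M by ring,
      show 2 * a * (m + M) = 2 * a * m + 2 * a * M by ring,
      show -2 * a * m = -(2 * a * m) by ring,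
      show (2 * a + L) * m + (2 * a + L) * M = L * m + (L * M + (2 * a * m + 2 * a * M)) by ring,
      show L * m + (2 * a + L) * M = L * m + (L * M + 2 * a * M) by ring,
      show (L - 2 * a) * m + (2 * a + L) * M = -(2 * a * m) + (L * m + (L * M + 2 * a * M)) by
        ring]
  simp only [Real.exp_add, Real.exp_neg]
  field_simp
  ring

theorem stmt_15 (a γ : ℝ) (ha : a < 0) (hγ0 : 0 < γ) (hγ1 : γ < 1) :
    IntegrableOn
        (fun p : ℝ × ℝ => γ ^ (p.1 + p.2) * Real.exp (2 * a * (p.1 + p.2)) *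
          (1 - Real.exp (-2 * a * min p.1 p.2)) ^ 2)
        (Set.Ioi 0 ×ˢ Set.Ioi 0) ∧
      ∫ p in Set.Ioi (0 : ℝ) ×ˢ Set.Ioi (0 : ℝ),
          γ ^ (p.1 + p.2) * Real.exp (2 * a * (p.1 + p.2)) *
            (1 - Real.exp (-2 * a * min p.1 p.2)) ^ 2 =
        2 * a ^ 2 / (Real.log γ * (a + Real.log γ) * (2 * a + Real.log γ) ^ 2) := by
  have hL : Real.log γ < 0 := Real.log_neg hγ0 hγ1
  set L := Real.log γ with hLdef
  have hb : 2 * a + L < 0 := by linarith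
  have hfun : ∀ p : ℝ × ℝ,
      γ ^ (p.1 + p.2) * Real.exp (2 * a * (p.1 + p.2)) *
        (1 - Real.exp (-2 * a * min p.1 p.2)) ^ 2
      = Real.exp ((2 * a + L) * min p.1 p.2 + (2 * a + L) * max p.1 p.2)
        - 2 * Real.exp (L * min p.1 p.2 + (2 * a + L) * max p.1 p.2)
        + Real.exp ((L - 2 * a) * min p.1 p.2 + (2 * a + L) * max p.1 p.2) := by
    intro p
    rw [Real.rpow_def_of_pos hγ0, ← hLdef,
      show p.1 + p.2 = min p.1 p.2 + max p.1 p.2 from (min_add_max p.1 p.2).symm]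
    exact my_pt L a (min p.1 p.2) (max p.1 p.2)
  have i1 := my_aux_integrable (α := 2 * a + L) (β := 2 * a + L) hb (by linarith) le_rfl
  have i2 := my_aux_integrable (α := L) (β := 2 * a + L) hb (by linarith) (by linarith)
  have i3 := my_aux_integrable (α := L - 2 * a) (β := 2 * a + L) hb (by linarith) (by linarith)
  have hmeas : MeasurableSet (Set.Ioi (0:ℝ) ×ˢ Set.Ioi (0:ℝ)) :=
    measurableSet_Ioi.prod measurableSet_Ioi
  constructor
  · exact IntegrableOn.congr_fun ((i1.sub (i2.const_mul 2)).add i3)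
      (fun p _ => (hfun p).symm) hmeas
  · have i2' : IntegrableOn
        (fun p : ℝ × ℝ => 2 * Real.exp (L * min p.1 p.2 + (2 * a + L) * max p.1 p.2))
        (Set.Ioi 0 ×ˢ Set.Ioi 0) := i2.const_mul 2
    have i12 : IntegrableOn
        (fun p : ℝ × ℝ => Real.exp ((2 * a + L) * min p.1 p.2 + (2 * a + L) * max p.1 p.2)
          - 2 * Real.exp (L * min p.1 p.2 + (2 * a + L) * max p.1 p.2))
        (Set.Ioi 0 ×ˢ Set.Ioi 0) := i1.sub i2'
    rw [setIntegral_congr_fun hmeas (fun p _ => hfun p),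
      integral_add i12 i3,
      integral_sub i1 i2', integral_const_mul,
      my_aux_integral hb (by linarith) le_rfl,
      my_aux_integral hb (by linarith) (by linarith),
      my_aux_integral hb (by linarith) (by linarith)]
    have h1 : (2 * a + L) ≠ 0 := ne_of_lt hb
    have h2 : L ≠ 0 := ne_of_lt hL
    have h3 : a + L ≠ 0 := by intro h; linarith [h]
    have h4 : L + (2 * a + L) ≠ 0 := by intro h; apply h3; linarith
    have h5 : L - 2 * a + (2 * a + L) ≠ 0 := by intro h; apply h2; linarith
    have h6 : (2 * a + L) + (2 * a + L) ≠ 0 := by intro h; apply h1; linarith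
    field_simp
    ring
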